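/- Let s : (0,∞) → ℝ be a nondecreasing continuous function and let f : ℂ → ℂ be an entire function that is bounded on the rotating half-plane Ω_s. Then sup_{z ∈ ℂ} min{|f(z)|, |f(−z)|} < ∞. -/

import Mathlib

/-- The rotating half-plane `Ω_s = {r·e^{iα} : r > 0, s r < α < s r + π}`. -/
def rotHalfPlane (s : ℝ → ℝ) : Set ℂ :=
  {z : ℂ | ∃ r α : ℝ, 0 < r ∧ s r < α ∧ α < s r + Real.pi ∧
    z = (r : ℂ) * Complex.exp (α * Complex.I)}

lemma mem_aux (s : ℝ → ℝ) (r β : ℝ) (hr : 0 < r)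
    (hβ : ∀ k : ℤ, β - s r ≠ k * Real.pi) :
    ((r:ℂ) * Complex.exp (β * Complex.I) ∈ rotHalfPlane s) ∨
    (-((r:ℂ) * Complex.exp (β * Complex.I)) ∈ rotHalfPlane s) := by
  set π := Real.pi with hπ
  have hπpos := Real.pi_pos
  set k : ℤ := ⌊(β - s r) / π⌋ with hk
  have h1 : (k:ℝ) * π ≤ β - s r := by
    have := Int.floor_le ((β - s r) / π)
    calc (k:ℝ) * π ≤ ((β - s r)/π) * π := by nlinarith
    _ = β - s r := div_mul_cancel₀ _ hπpos.ne'
  have h1' : (k:ℝ) * π < β - s r := lt_of_le_of_ne h1 (fun h => hβ k h.symm)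
  have h2 : β - s r < (k+1) * π := by
    have := Int.lt_floor_add_one ((β - s r) / π)
    have : (β - s r)/π < (k:ℝ) + 1 := by exact_mod_cast this
    have := (div_lt_iff₀ hπpos).mp this
    linarith
  set α : ℝ := β - k * π with hα
  have hα1 : s r < α := by simp only [hα]; linarith
  have hα2 : α < s r + π := by simp only [hα]; linarith
  have hexp : Complex.exp (β * Complex.I)
      = Complex.exp (α * Complex.I) * Complex.exp ((k:ℂ) * (π * Complex.I)) := by
    rw [← Complex.exp_add]
    congr 1
    push_cast [hα]
    ring
  have hkexp : Complex.exp ((k:ℂ) * (π * Complex.I)) = (-1 : ℂ) ^ k := by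
    rw [Complex.exp_int_mul, Complex.exp_pi_mul_I]
  rcases Int.even_or_odd k with he | ho
  · left
    refine ⟨r, α, hr, hα1, hα2, ?_⟩
    rw [hexp, hkexp, he.neg_one_zpow, mul_one]
  · right
    refine ⟨r, α, hr, hα1, hα2, ?_⟩
    rw [hexp, hkexp, ho.neg_one_zpow]
    ring

lemma dense_aux (s : ℝ → ℝ) (z : ℂ) (ε : ℝ) (hε : 0 < ε) :
    ∃ w : ℂ, dist w z < ε ∧
      (w ∈ rotHalfPlane s ∨ -w ∈ rotHalfPlane s) := by
  have hπpos := Real.pi_pos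
  by_cases hz : z = 0
  · subst hz
    set r : ℝ := ε / 2 with hr
    have hrpos : 0 < r := by positivity
    refine ⟨(r:ℂ) * Complex.exp ((s r + Real.pi/2) * Complex.I), ?_, Or.inl ?_⟩
    · have : ‖(r:ℂ) * Complex.exp ((s r + Real.pi/2) * Complex.I)‖ = r := by
        rw [norm_mul, Complex.norm_exp]
        simp [abs_of_pos hrpos]
      simp only [dist_zero_right, this]
      linarith
    · refine ⟨r, s r + Real.pi/2, hrpos, by linarith, by linarith, ?_⟩
      push_cast
      ring
  · obtain ⟨r, hr⟩ : ∃ r : ℝ, r = ‖z‖ := ⟨_, rfl⟩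
    have hrpos : 0 < r := by rw [hr]; exact norm_pos_iff.mpr hz
    obtain ⟨θ, hθ⟩ : ∃ θ : ℝ, θ = Complex.arg z := ⟨_, rfl⟩
    have hz' : z = (r:ℂ) * Complex.exp (θ * Complex.I) := by
      rw [hr, hθ]; exact (Complex.norm_mul_exp_arg_mul_I z).symm
    obtain ⟨δ, hδ⟩ : ∃ δ : ℝ, δ = min 1 (ε / (4 * r)) := ⟨_, rfl⟩
    have hδpos : 0 < δ := by
      rw [hδ]; apply lt_min one_pos; positivity
    have hδ1 : δ ≤ 1 := hδ ▸ min_le_left _ _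
    have hδε : 2 * r * δ < ε := by
      have h2 : δ ≤ ε / (4 * r) := hδ ▸ min_le_right _ _
      have h4 : δ * (4 * r) ≤ ε := (le_div_iff₀ (by positivity)).mp h2
      nlinarith
    -- choose good perturbation among δ and δ/2
    have hgood : ∃ u : ℝ, 0 < u ∧ u ≤ δ ∧ ∀ k : ℤ, (θ + u) - s r ≠ k * Real.pi := by
      by_cases h1 : ∀ k : ℤ, (θ + δ) - s r ≠ k * Real.pi
      · exact ⟨δ, hδpos, le_refl _, h1⟩
      · refine ⟨δ/2, by linarith, by linarith, ?_⟩
        push_neg at h1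
        obtain ⟨k1, hk1⟩ := h1
        intro k2 hk2
        have : δ/2 = (k1 - k2 : ℤ) * Real.pi := by push_cast; linarith
        have hpos : (0:ℝ) < (k1 - k2 : ℤ) * Real.pi := by linarith
        have : (1:ℤ) ≤ k1 - k2 := by
          by_contra hc
          push_neg at hc
          have : (k1 - k2 : ℤ) ≤ 0 := by omega
          have : ((k1 - k2 : ℤ) : ℝ) ≤ 0 := by exact_mod_cast this
          nlinarith
        have : ((k1 - k2 : ℤ) : ℝ) ≥ 1 := by exact_mod_cast this
        nlinarith [Real.pi_gt_three]
    obtain ⟨u, hu0, huδ, hu⟩ := hgood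
    refine ⟨(r:ℂ) * Complex.exp (((θ + u : ℝ) : ℂ) * Complex.I), ?_, mem_aux s r (θ + u) hrpos hu⟩
    · have hfact : (r:ℂ) * Complex.exp (((θ + u : ℝ) : ℂ) * Complex.I) - z
          = (r:ℂ) * Complex.exp (θ * Complex.I) * (Complex.exp ((u:ℂ) * Complex.I) - 1) := by
        rw [hz']
        rw [show ((θ + u : ℝ) : ℂ) * Complex.I = θ * Complex.I + u * Complex.I by push_cast; ring,
          Complex.exp_add]
        ring
      have habs : ‖Complex.exp ((u:ℂ) * Complex.I) - 1‖ ≤ 2 * u := by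
        have h := Complex.norm_exp_sub_one_le (x := (u:ℂ) * Complex.I) ?_
        · simpa [Complex.norm_exp, abs_of_pos hu0] using h
        · simp [abs_of_pos hu0]; linarith
      rw [Complex.dist_eq, hfact]
      rw [norm_mul, norm_mul, Complex.norm_exp]
      simp only [Complex.mul_re, Complex.I_re, Complex.I_im, Complex.ofReal_re,
        Complex.ofReal_im]
      have : ‖(r:ℂ)‖ = r := by simp [abs_of_pos hrpos]
      rw [this]
      calc r * Real.exp ((θ:ℝ) * 0 - 0 * 1) * ‖Complex.exp ((u:ℂ) * Complex.I) - 1‖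
          ≤ r * 1 * (2 * u) := by
            simp only [mul_zero, zero_mul, sub_zero, Real.exp_zero]
            nlinarith
        _ ≤ 2 * r * δ := by nlinarith
        _ < ε := hδε

theorem min_of_antipodes_bounded (s : ℝ → ℝ)
    (hmono : MonotoneOn s (Set.Ioi 0))
    (hcont : ContinuousOn s (Set.Ioi 0))
    (f : ℂ → ℂ) (hf : Differentiable ℂ f)
    (hbdd : ∃ M : ℝ, ∀ z ∈ rotHalfPlane s, ‖f z‖ ≤ M) :
    ∃ M : ℝ, ∀ z : ℂ, min (‖f z‖) (‖f (-z)‖) ≤ M := by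
  obtain ⟨M, hM⟩ := hbdd
  refine ⟨M, fun z => ?_⟩
  by_contra h
  push_neg at h
  have hg : Continuous (fun z : ℂ => min (‖f z‖) (‖f (-z)‖)) := by
    apply Continuous.min
    · exact continuous_norm.comp hf.continuous
    · exact continuous_norm.comp (hf.continuous.comp continuous_neg)
  have hnhds : (fun z : ℂ => min (‖f z‖) (‖f (-z)‖)) ⁻¹'
      Set.Ioi M ∈ nhds z := by
    exact hg.continuousAt.preimage_mem_nhds (Ioi_mem_nhds h)
  obtain ⟨ε, hε, hball⟩ := Metric.mem_nhds_iff.mp hnhds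
  obtain ⟨w, hw, hmem⟩ := dense_aux s z ε hε
  have hwball : w ∈ Metric.ball z ε := by simpa [Metric.mem_ball] using hw
  have hgt : M < min (‖f w‖) (‖f (-w)‖) := hball hwball
  rcases hmem with hmem | hmem
  · have := hM w hmem
    have := min_le_left (‖f w‖) (‖f (-w)‖)
    linarith
  · have := hM (-w) hmem
    have := min_le_right (‖f w‖) (‖f (-w)‖)
    linarith
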